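/- Define 𝔔_{α,F,C}(u,v) = ∫_{[0,u]×[0,v]} 𝔠_{α,F,C}(s,t) dλ^{d+1}(s,t). Then for all n ∈ ℕ₀ and all (u,v) with u ∈ (F(n-1), F(n)], one has 𝔔_{α,F,C}(u,v) = Σ_{k=0}^{n-1} ∂₁C(F_α(k), v)·P(N = k) + ∂₁C(F_α(n), v)·(u − F(n−1)), where P(N = k) = F(k) − F(k−1). -/

import Mathlib

open MeasureTheory Set Filter

/-- `F(n-1)` with the convention `F(-1) = 0`. -/
noncomputable def Fm (F : ℕ → ℝ) : ℕ → ℝ := fun n => if n = 0 then 0 else F (n - 1)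

/-- `F_α(n) = (1-α) F(n-1) + α F(n)`. -/
noncomputable def Falpha (α : ℝ) (F : ℕ → ℝ) (n : ℕ) : ℝ :=
  (1 - α) * Fm F n + α * F n

/-- `⌈u⌉_{α,F} = Σ_{n ≥ 0} F_α(n) · 1_{(F(n-1), F(n)]}(u)`, with `⌈0⌉ = 0` automatic. -/
noncomputable def ceilT (α : ℝ) (F : ℕ → ℝ) (u : ℝ) : ℝ :=
  ∑' n : ℕ, Falpha α F n * Set.indicator (Set.Ioc (Fm F n) (F n)) (fun _ => (1 : ℝ)) u

/-- `𝔔_{α,F,C}(u,v) = ∫_{[0,u]×[0,v]} c(⌈s⌉_{α,F}, t) dλ^{d+1}(s,t)`,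
the distribution function of the transformed density. -/
noncomputable def Qbox (d : ℕ) (α : ℝ) (F : ℕ → ℝ) (c : ℝ → (Fin d → ℝ) → ℝ)
    (u : ℝ) (v : Fin d → ℝ) : ℝ :=
  ∫ p in (Set.Icc (0 : ℝ) u) ×ˢ (Set.Icc (0 : Fin d → ℝ) v), c (ceilT α F p.1) p.2

lemma Fm_le (F : ℕ → ℝ) (hmono : Monotone F) (hF0 : ∀ n, 0 ≤ F n) (n : ℕ) :
    Fm F n ≤ F n := by
  unfold Fm
  by_cases h : n = 0
  · simp [h, hF0]
  · simp only [h, if_false]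
    exact hmono (by omega)

lemma Fm_nonneg (F : ℕ → ℝ) (hF0 : ∀ n, 0 ≤ F n) (n : ℕ) : 0 ≤ Fm F n := by
  unfold Fm; by_cases h : n = 0 <;> simp [h, hF0]

/-- On the interval `(F(n-1), F(n)]`, the step function equals `F_α(n)`. -/
lemma ceilT_eq (α : ℝ) (F : ℕ → ℝ) (hmono : Monotone F) (hF0 : ∀ n, 0 ≤ F n)
    (n : ℕ) {s : ℝ} (hs : s ∈ Set.Ioc (Fm F n) (F n)) :
    ceilT α F s = Falpha α F n := by
  unfold ceilT
  rw [tsum_eq_single n]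
  · rw [Set.indicator_of_mem hs]; ring
  · intro m hm
    rw [Set.indicator_of_notMem, mul_zero]
    intro hmem
    rcases lt_or_gt_of_ne hm with h | h
    · have h1 : F m ≤ Fm F n := by
        unfold Fm
        have hn0 : n ≠ 0 := by omega
        simp only [hn0, if_false]
        exact hmono (by omega)
      exact absurd hmem.2 (not_le.mpr (lt_of_le_of_lt h1 hs.1))
    · have h1 : F n ≤ Fm F m := by
        unfold Fm
        have hm0 : m ≠ 0 := by omega
        simp only [hm0, if_false]
        exact hmono (by omega)
      exact absurd hmem.1 (not_lt.mpr (hs.2.trans h1))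

/-- Integral over a single cell. -/
lemma cell_int (d : ℕ) (α : ℝ) (F : ℕ → ℝ) (hmono : Monotone F) (hF0 : ∀ n, 0 ≤ F n)
    (c : ℝ → (Fin d → ℝ) → ℝ) (v : Fin d → ℝ) (n : ℕ) {a b : ℝ}
    (ha : Fm F n ≤ a) (hb : b ≤ F n) (hab : a ≤ b) :
    ∫ p in (Set.Ioc a b) ×ˢ (Set.Icc (0 : Fin d → ℝ) v), c (ceilT α F p.1) p.2 =
      (∫ t in Set.Icc (0 : Fin d → ℝ) v, c (Falpha α F n) t) * (b - a) := by
  have hcongr : ∀ p ∈ (Set.Ioc a b) ×ˢ (Set.Icc (0 : Fin d → ℝ) v),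
      c (ceilT α F p.1) p.2 = (1 : ℝ) * c (Falpha α F n) p.2 := by
    rintro ⟨s, t⟩ ⟨hs, _⟩
    rw [one_mul, ceilT_eq α F hmono hF0 n ⟨lt_of_le_of_lt ha hs.1, hs.2.trans hb⟩]
  rw [setIntegral_congr_fun (by measurability) hcongr, Measure.volume_eq_prod,
    setIntegral_prod_mul (fun _ => (1 : ℝ)) (fun t => c (Falpha α F n) t),
    setIntegral_const, Real.volume_real_Ioc_of_le hab, smul_eq_mul, mul_one]
  ring

/-- Integral over `(0, F m] × [0,v]`. -/
lemma prefix_int (d : ℕ) (α : ℝ) (F : ℕ → ℝ) (hmono : Monotone F) (hF0 : ∀ n, 0 ≤ F n)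
    (hF1 : ∀ n, F n ≤ 1) (c : ℝ → (Fin d → ℝ) → ℝ)
    (hc_int : IntegrableOn (fun p : ℝ × (Fin d → ℝ) => c (ceilT α F p.1) p.2)
      ((Set.Icc (0 : ℝ) 1) ×ˢ (Set.Icc (0 : Fin d → ℝ) 1)))
    (v : Fin d → ℝ) (hv : v ∈ Set.Icc (0 : Fin d → ℝ) 1) (m : ℕ) :
    ∫ p in (Set.Ioc (0 : ℝ) (F m)) ×ˢ (Set.Icc (0 : Fin d → ℝ) v), c (ceilT α F p.1) p.2 =
      ∑ k ∈ Finset.range (m + 1),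
        (∫ t in Set.Icc (0 : Fin d → ℝ) v, c (Falpha α F k) t) * (F k - Fm F k) := by
  induction m with
  | zero =>
    rw [Finset.sum_range_one]
    have h0 : Fm F 0 = 0 := by simp [Fm]
    rw [← h0]
    exact cell_int d α F hmono hF0 c v 0 le_rfl le_rfl (h0 ▸ hF0 0)
  | succ m ih =>
    have hsplit : Set.Ioc (0 : ℝ) (F (m + 1)) =
        Set.Ioc (0 : ℝ) (F m) ∪ Set.Ioc (F m) (F (m + 1)) :=
      (Set.Ioc_union_Ioc_eq_Ioc (hF0 m) (hmono (by omega))).symm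
    have hsub : ∀ x y : ℝ, 0 ≤ x → y ≤ 1 →
        (Set.Ioc x y) ×ˢ (Set.Icc (0 : Fin d → ℝ) v) ⊆
        (Set.Icc (0 : ℝ) 1) ×ˢ (Set.Icc (0 : Fin d → ℝ) 1) := by
      intro x y hx hy
      apply Set.prod_mono
      · exact (Set.Ioc_subset_Icc_self).trans (Set.Icc_subset_Icc hx hy)
      · exact Set.Icc_subset_Icc le_rfl hv.2
    have hFm : Fm F (m + 1) = F m := by simp [Fm]
    rw [hsplit, Set.union_prod, setIntegral_union]
    · rw [ih, cell_int d α F hmono hF0 c v (m + 1)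
        hFm.le le_rfl (hmono (by omega)), Finset.sum_range_succ (n := m + 1), hFm]
    · exact Set.Disjoint.set_prod_left
        (Set.Ioc_disjoint_Ioc.mpr (inf_le_left.trans le_sup_right)) _ _
    · exact (measurableSet_Ioc.prod measurableSet_Icc)
    · exact hc_int.mono_set (hsub 0 (F m) le_rfl (hF1 m))
    · exact hc_int.mono_set (hsub (F m) (F (m + 1)) (hF0 m) (hF1 (m + 1)))

/-- for `u ∈ (F(n-1), F(n)]` and `v ∈ [0,1]^d`,
`𝔔_{α,F,C}(u,v) = Σ_{k<n} ∂₁C(F_α(k),v)·P(N=k) + ∂₁C(F_α(n),v)·(u − F(n−1))`,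
where `∂₁C(w,v) = ∫_{[0,v]} c(w,t) dt` and `P(N=k) = F(k) − F(k−1)`. -/
theorem stmt4 (d : ℕ) (F : ℕ → ℝ) (hmono : Monotone F) (hF0 : ∀ n, 0 ≤ F n)
    (hF1 : ∀ n, F n ≤ 1) (hlim : Tendsto F atTop (nhds 1))
    (α : ℝ) (hα : α ∈ Set.Ioc (0 : ℝ) 1)
    (c : ℝ → (Fin d → ℝ) → ℝ)
    (hc_meas : Measurable (Function.uncurry c))
    (hc_nonneg : ∀ u v, 0 ≤ c u v)
    (hc_int : IntegrableOn (fun p : ℝ × (Fin d → ℝ) => c (ceilT α F p.1) p.2)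
      ((Set.Icc (0 : ℝ) 1) ×ˢ (Set.Icc (0 : Fin d → ℝ) 1))) :
    ∀ (n : ℕ), ∀ u ∈ Set.Ioc (Fm F n) (F n), ∀ v ∈ Set.Icc (0 : Fin d → ℝ) 1,
      Qbox d α F c u v =
        (∑ k ∈ Finset.range n,
          (∫ t in Set.Icc (0 : Fin d → ℝ) v, c (Falpha α F k) t) * (F k - Fm F k)) +
        (∫ t in Set.Icc (0 : Fin d → ℝ) v, c (Falpha α F n) t) * (u - Fm F n) := by
  intro n u hu v hv
  have hu0 : 0 < u := lt_of_le_of_lt (Fm_nonneg F hF0 n) hu.1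
  have hu1 : u ≤ 1 := hu.2.trans (hF1 n)
  -- replace Icc 0 u with Ioc 0 u (a.e. equal in the product)
  have hnull : volume (({0} : Set ℝ) ×ˢ (Set.univ : Set (Fin d → ℝ))) = 0 := by
    rw [Measure.volume_eq_prod, Measure.prod_prod]
    simp
  have hae : (Set.Icc (0 : ℝ) u) ×ˢ (Set.Icc (0 : Fin d → ℝ) v)
      =ᵐ[volume] (Set.Ioc (0 : ℝ) u) ×ˢ (Set.Icc (0 : Fin d → ℝ) v) := by
    rw [MeasureTheory.ae_eq_set]
    constructor
    · refine measure_mono_null ?_ hnull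
      rintro ⟨x, y⟩ ⟨⟨hx, hy⟩, hnot⟩
      have hx0 : x = 0 := by
        by_contra h
        exact hnot ⟨⟨lt_of_le_of_ne hx.1 (Ne.symm h), hx.2⟩, hy⟩
      exact ⟨hx0, trivial⟩
    · refine measure_mono_null ?_ hnull
      rintro ⟨x, y⟩ ⟨⟨hx, hy⟩, hnot⟩
      exact absurd ⟨⟨hx.1.le, hx.2⟩, hy⟩ hnot
  rw [Qbox, setIntegral_congr_set hae]
  have hsplit : Set.Ioc (0 : ℝ) u = Set.Ioc (0 : ℝ) (Fm F n) ∪ Set.Ioc (Fm F n) u :=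
    (Set.Ioc_union_Ioc_eq_Ioc (Fm_nonneg F hF0 n) hu.1.le).symm
  have hsub : ∀ x y : ℝ, 0 ≤ x → y ≤ 1 →
      (Set.Ioc x y) ×ˢ (Set.Icc (0 : Fin d → ℝ) v) ⊆
      (Set.Icc (0 : ℝ) 1) ×ˢ (Set.Icc (0 : Fin d → ℝ) 1) := by
    intro x y hx hy
    apply Set.prod_mono
    · exact (Set.Ioc_subset_Icc_self).trans (Set.Icc_subset_Icc hx hy)
    · exact Set.Icc_subset_Icc le_rfl hv.2
  rw [hsplit, Set.union_prod, setIntegral_union]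
  · congr 1
    · -- first piece
      cases n with
      | zero => simp [Fm]
      | succ m =>
        have : Fm F (m + 1) = F m := by simp [Fm]
        rw [this, prefix_int d α F hmono hF0 hF1 c hc_int v hv m]
    · exact cell_int d α F hmono hF0 c v n le_rfl hu.2 hu.1.le
  · exact Set.Disjoint.set_prod_left
      (Set.Ioc_disjoint_Ioc.mpr (inf_le_left.trans le_sup_right)) _ _
  · exact (measurableSet_Ioc.prod measurableSet_Icc)
  · exact hc_int.mono_set (hsub 0 (Fm F n) le_rfl ((Fm_le F hmono hF0 n).trans (hF1 n)))
  · exact hc_int.mono_set (hsub (Fm F n) u (Fm_nonneg F hF0 n) hu1)
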